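/- Let H be a numerical semigroup of genus g and let ρ be the number of even gaps of H. Then 2g ≥ 3ρ. -/
import Mathlib


/-- A numerical semigroup: a cofinite subsemigroup of ℕ containing 0. -/
def IsNumSgp (S : Set ℕ) : Prop :=
  0 ∈ S ∧ (∀ a ∈ S, ∀ b ∈ S, a + b ∈ S) ∧ (Sᶜ).Finite

/-- The genus: number of gaps. -/
noncomputable def genus (S : Set ℕ) : ℕ := Sᶜ.ncard

/-- The j-th smallest positive element (non-gap) of `S`, 1-indexed. -/
noncomputable def nongap (S : Set ℕ) (j : ℕ) : ℕ :=
  Nat.nth (fun n => n ∈ S ∧ 0 < n) (j - 1)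

/-- The i-th smallest gap of `S`, 1-indexed. -/
noncomputable def gapNth (S : Set ℕ) (i : ℕ) : ℕ :=
  Nat.nth (fun n => n ∉ S) (i - 1)

/-- The weight of the semigroup. -/
noncomputable def weight (S : Set ℕ) : ℕ :=
  ∑ i ∈ Finset.Icc 1 (genus S), (gapNth S i - i)

/-- The number of even gaps of `S`. -/
noncomputable def evenGaps (S : Set ℕ) : ℕ := {n | n ∉ S ∧ Even n}.ncard

/-- `S` is γ-hyperelliptic: exactly γ even elements in [2,4γ], and the
(γ+1)-th positive element is 4γ+2. -/
noncomputable def GammaHyper (S : Set ℕ) (γ : ℕ) : Prop :=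
  {n ∈ S | Even n ∧ 2 ≤ n ∧ n ≤ 4 * γ}.ncard = γ ∧ nongap S (γ + 1) = 4 * γ + 2

theorem stmt_3 (S : Set ℕ) (hS : IsNumSgp S) :
    3 * evenGaps S ≤ 2 * genus S := by
  classical
  obtain ⟨h0, hadd, hfin⟩ := hS
  have hex : ∃ n, Odd n ∧ n ∈ S := by
    by_contra h
    push_neg at h
    have hsub : {n : ℕ | Odd n} ⊆ Sᶜ := fun n hn => h n hn
    have hinf : {n : ℕ | Odd n}.Infinite := by
      exact Set.infinite_of_injective_forall_mem (f := fun k : ℕ => 2 * k + 1)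
        (fun a b hab => by have h2 : 2 * a + 1 = 2 * b + 1 := hab; omega) (fun k => ⟨k, rfl⟩)
    exact hinf (hfin.subset hsub)
  set m := Nat.find hex with hmdef
  obtain ⟨hmodd, hmS⟩ := Nat.find_spec hex
  have hmin : ∀ k < m, Odd k → k ∉ S := fun k hk hodd hkS =>
    Nat.find_min hex hk ⟨hodd, hkS⟩
  set T := hfin.toFinset with hT
  set A := T.filter (fun n => Even n) with hA
  set B := T.filter (fun n => ¬ Even n) with hB
  have hTmem : ∀ n, n ∈ T ↔ n ∉ S := by
    intro n; rw [hT, Set.Finite.mem_toFinset]; rfl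
  have hgenus : genus S = A.card + B.card := by
    rw [genus, Set.ncard_eq_toFinset_card _ hfin, ← hT, hA, hB,
      Finset.card_filter_add_card_filter_not]
  have hev : evenGaps S = A.card := by
    rw [evenGaps]
    have : {n | n ∉ S ∧ Even n} = ↑A := by
      ext n
      simp [hA, hTmem n, and_comm]
    rw [this, Set.ncard_coe_finset]
  -- the key map from even gaps to odd gaps
  set f : ℕ → ℕ := fun e => if m < e then e - m else m - e with hf
  have key : A.card ≤ 2 * B.card := by
    apply Finset.card_le_mul_card_image_of_maps_to (f := f) (t := B)
    · -- maps even gaps to odd gaps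
      intro e he
      rw [hA, Finset.mem_filter, hTmem] at he
      obtain ⟨heS, heEven⟩ := he
      have he0 : e ≠ 0 := fun h => heS (h ▸ h0)
      obtain ⟨a, ha⟩ := hmodd
      obtain ⟨b, hb⟩ := heEven
      have hne : e ≠ m := by omega
      rw [hB, Finset.mem_filter, hTmem]
      show (if m < e then e - m else m - e) ∉ S ∧ ¬ Even (if m < e then e - m else m - e)
      by_cases hlt : m < e
      · rw [if_pos hlt]
        refine ⟨fun hc => heS ?_, fun ⟨c, hc⟩ => by omega⟩
        have h2 := hadd _ hc _ hmS
        have h3 : e - m + m = e := by omega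
        rwa [h3] at h2
      · rw [if_neg hlt]
        have hlt' : e < m := by omega
        refine ⟨hmin _ (by omega) ⟨a - b, by omega⟩, ?_⟩
        intro ⟨c, hc⟩; omega
    · -- fibers have at most 2 elements
      intro b _
      have hsub : {a ∈ A | f a = b} ⊆ {b + m, m - b} := by
        intro e he
        rw [Finset.mem_filter] at he
        obtain ⟨-, hfe⟩ := he
        have hfe' : (if m < e then e - m else m - e) = b := hfe
        clear hfe
        simp only [Finset.mem_insert, Finset.mem_singleton]
        by_cases hlt : m < e
        · rw [if_pos hlt] at hfe'; left; omega
        · rw [if_neg hlt] at hfe'; right; omega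
      calc ({a ∈ A | f a = b}).card ≤ ({b + m, m - b} : Finset ℕ).card :=
            Finset.card_le_card hsub
        _ ≤ 2 := Finset.card_insert_le _ _ |>.trans (by simp)
  omega
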